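/- Every infinite-dimensional normed space X contains an infinite-dimensional closed subspace Y possessing a Schauder basis (xₙ) whose canonical projections Pₙ are bounded linear operators on Y with supₙ ‖Pₙ‖ < ∞. -/

import Mathlib

open Filter Topology

variable (𝕜 : Type*) [RCLike 𝕜]
variable {X : Type*} [NormedAddCommGroup X] [NormedSpace 𝕜 X]

/-- The `n`-th partial sum `∑_{i<n} aᵢ • xᵢ` of the expansion with coefficients `a`. -/
noncomputable def partialSum (x : ℕ → X) (a : ℕ → 𝕜) (n : ℕ) : X :=
  ∑ i ∈ Finset.range n, a i • x i

/-- `v` has the expansion `v = ∑ᵢ aᵢ xᵢ` (ordered convergence of partial sums). -/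
def Expands (x : ℕ → X) (a : ℕ → 𝕜) (v : X) : Prop :=
  Filter.Tendsto (partialSum 𝕜 x a) Filter.atTop (nhds v)

/-- `(xₙ)` is a Schauder basis of `X`: every vector has a unique expansion. -/
def IsSchauderBasis (x : ℕ → X) : Prop :=
  ∀ v : X, ∃! a : ℕ → 𝕜, Expands 𝕜 x a v

/-- `(xₙ)` is an essential Schauder basis of `X`: a Schauder basis for which the canonical
map `T : L_X → X` is an isomorphism; equivalently (since `‖T‖ ≤ 1` always holds), there is
`C > 0` bounding `η(a) = supₙ ‖∑_{i<n} aᵢxᵢ‖ ≤ C‖v‖` for every expansion `v = ∑ aᵢxᵢ`,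
i.e. `‖T⁻¹‖ ≤ C`. -/
def IsEssentialBasis (x : ℕ → X) : Prop :=
  IsSchauderBasis 𝕜 x ∧
    ∃ C > 0, ∀ (a : ℕ → 𝕜) (v : X), Expands 𝕜 x a v →
      ∀ n, ‖partialSum 𝕜 x a n‖ ≤ C * ‖v‖

/-- `(xₙ)` is an essential basic sequence: an essential Schauder basis of the closure of
its linear span. -/
def IsEssentialBasicSeq (x : ℕ → X) : Prop :=
  (∀ v ∈ closure (Submodule.span 𝕜 (Set.range x) : Set X),
      ∃! a : ℕ → 𝕜, Expands 𝕜 x a v) ∧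
    ∃ C > 0, ∀ (a : ℕ → 𝕜) (v : X), Expands 𝕜 x a v →
      ∀ n, ‖partialSum 𝕜 x a n‖ ≤ C * ‖v‖

/-- The Grunblum condition with constant `M`. -/
def Grunblum (x : ℕ → X) (M : ℝ) : Prop :=
  ∀ (a : ℕ → 𝕜) (m n : ℕ), m ≤ n →
    ‖partialSum 𝕜 x a m‖ ≤ M * ‖partialSum 𝕜 x a n‖

/-- Mazur's perturbation lemma. -/
theorem mazur (hX : ¬ FiniteDimensional 𝕜 X) (F : Submodule 𝕜 X)
    (hF : FiniteDimensional 𝕜 F) {ε : ℝ} (hε : 0 < ε) :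
    ∃ u : X, ‖u‖ = 1 ∧ ∀ y ∈ F, ∀ c : 𝕜, ‖y‖ ≤ (1 + ε) * ‖y + c • u‖ := by
  classical
  set ε' : ℝ := ε / (1 + ε) with hε'def
  have h1ε : (0:ℝ) < 1 + ε := by linarith
  have hε' : 0 < ε' := div_pos hε h1ε
  -- the unit sphere of F, viewed in X
  have : ProperSpace F := FiniteDimensional.proper 𝕜 F
  set S : Set X := (Subtype.val '' (Metric.sphere (0:F) 1)) with hSdef
  have hScompact : IsCompact S := (isCompact_sphere (0:F) 1).image continuous_subtype_val
  have hcover : S ⊆ ⋃ i ∈ S, Metric.ball i ε' := fun z hz =>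
    Set.mem_biUnion hz (Metric.mem_ball_self hε')
  obtain ⟨t, hts, htfin, hcov⟩ := hScompact.elim_finite_subcover_image
    (fun i (_ : i ∈ S) => Metric.isOpen_ball) hcover
  haveI : Fintype t := htfin.fintype
  -- dual vectors
  have hnz : ∀ i ∈ t, (i : X) ≠ 0 := by
    intro i hi
    have : i ∈ S := hts hi
    obtain ⟨z, hz, rfl⟩ := this
    simp only [Metric.mem_sphere, dist_zero_right] at hz
    intro h
    rw [← norm_eq_zero] at h
    rw [show ‖(z:X)‖ = ‖z‖ from rfl] at h
    rw [hz] at h; norm_num at h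
  choose! f hf1 hf2 using fun i (hi : i ∈ t) => exists_dual_vector 𝕜 i (norm_ne_zero_iff.2 (hnz i hi))
  -- a nonzero vector in the intersection of the kernels
  obtain ⟨u₀, hu₀mem, hu₀ne⟩ : ∃ u₀ : X, (∀ i ∈ t, f i u₀ = 0) ∧ u₀ ≠ 0 := by
    by_contra h
    push_neg at h
    have hinj : Function.Injective (LinearMap.pi (fun i : t => ((f i).toLinearMap))) := by
      rw [← LinearMap.ker_eq_bot, LinearMap.ker_eq_bot']
      intro m hm
      exact h m fun i hi => by simpa using congrFun hm ⟨i, hi⟩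
    exact hX (FiniteDimensional.of_injective _ hinj)
  refine ⟨(‖u₀‖⁻¹ : 𝕜) • u₀, ?_, ?_⟩
  · rw [norm_smul]
    simp [norm_ne_zero_iff.2 hu₀ne]
  intro y hy c
  rcases eq_or_ne y 0 with rfl | hy0
  · simp; positivity
  have hyn : (0:ℝ) < ‖y‖ := norm_pos_iff.2 hy0
  -- w is on the sphere
  have hwS : ((‖y‖:𝕜))⁻¹ • y ∈ S := by
    refine ⟨⟨((‖y‖:𝕜))⁻¹ • y, F.smul_mem _ hy⟩, ?_, rfl⟩
    simp only [Metric.mem_sphere, dist_zero_right]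
    show ‖((‖y‖:𝕜))⁻¹ • y‖ = 1
    rw [norm_smul]
    simp [hyn.ne']
  set w : X := ((‖y‖:𝕜))⁻¹ • y with hwdef
  obtain ⟨i, hit, hiw⟩ : ∃ i ∈ t, w ∈ Metric.ball i ε' := by
    have := hcov hwS
    simpa using this
  -- main estimate for w
  set u : X := (‖u₀‖⁻¹ : 𝕜) • u₀
  have hfu : f i u = 0 := by
    simp only [u, map_smul, hu₀mem i hit, smul_zero]
  have hi1 : ‖(i:X)‖ = 1 := by
    obtain ⟨z, hz, hzi⟩ := hts hit
    simp only [Metric.mem_sphere, dist_zero_right] at hz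
    rw [← hzi]; exact hz
  have key : ∀ d : 𝕜, 1 - ε' ≤ ‖w + d • u‖ := by
    intro d
    have h1 : ‖f i (w + d • u)‖ ≤ ‖w + d • u‖ := by
      calc ‖f i (w + d • u)‖ ≤ ‖f i‖ * ‖w + d • u‖ := (f i).le_opNorm _
        _ = ‖w + d • u‖ := by rw [hf1 i hit, one_mul]
    have h2 : f i (w + d • u) = f i w := by
      have : f i (d • u) = d • f i u := (f i).map_smul d u
      rw [map_add, this, hfu, smul_zero, add_zero]
    have h3 : ‖f i w‖ ≥ 1 - ε' := by
      have : f i w = f i i + f i (w - i) := by rw [map_sub]; ring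
      rw [this, hf2 i hit, hi1]
      have h4 : ‖f i (w - i)‖ ≤ ε' := by
        calc ‖f i (w - i)‖ ≤ ‖f i‖ * ‖w - i‖ := (f i).le_opNorm _
          _ ≤ 1 * ε' := by
              refine mul_le_mul (le_of_eq (hf1 i hit)) ?_ (norm_nonneg _) zero_le_one
              rw [← dist_eq_norm]; exact le_of_lt (Metric.mem_ball.1 hiw)
          _ = ε' := one_mul _
      push_cast
      have h6 := norm_add_le ((1:𝕜) + f i (w - i)) (-(f i (w - i)))
      simp only [add_neg_cancel_right, norm_neg] at h6
      have h7 : ‖(1:𝕜)‖ = 1 := norm_one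
      linarith
    rw [h2] at h1
    linarith
  -- conclude
  clear_value u
  have hyne : ((‖y‖:ℝ):𝕜) ≠ 0 := by exact_mod_cast hyn.ne'
  have e1 : (‖y‖ : 𝕜) • w = y := by
    rw [hwdef, smul_smul, mul_inv_cancel₀ hyne, one_smul]
    
  have e2 : (‖y‖ : 𝕜) • (((‖y‖)⁻¹ * c : 𝕜) • u) = c • u := by
    rw [smul_smul, ← mul_assoc, ← RCLike.ofReal_mul, mul_inv_cancel₀ hyn.ne', RCLike.ofReal_one, one_mul]
  have hsc : y + c • u = (‖y‖ : 𝕜) • (w + ((‖y‖)⁻¹ * c : 𝕜) • u) := by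
    rw [smul_add, e1, e2]
  have : ‖y + c • u‖ = ‖y‖ * ‖w + ((‖y‖)⁻¹ * c : 𝕜) • u‖ := by
    rw [hsc, norm_smul]
    congr 1
    simp [abs_of_pos hyn]
  rw [this]
  have hkey := key ((‖y‖)⁻¹ * c : 𝕜)
  have h1ε' : (1+ε) * (1 - ε') = 1 := by
    rw [hε'def, mul_sub, mul_one, mul_div_assoc', mul_comm (1+ε) ε, mul_div_assoc, div_self h1ε.ne', mul_one]; ring
  calc ‖y‖ = (1+ε) * (1-ε') * ‖y‖ := by rw [h1ε', one_mul]
    _ ≤ (1+ε) * (‖y‖ * ‖w + ((‖y‖)⁻¹ * c : 𝕜) • u‖) := by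
        rw [mul_assoc]
        refine mul_le_mul_of_nonneg_left ?_ (le_of_lt h1ε)
        rw [mul_comm]
        exact mul_le_mul_of_nonneg_left hkey (le_of_lt hyn)

noncomputable def epsn (n : ℕ) : ℝ := (2:ℝ) ^ ((2:ℝ)⁻¹ ^ (n+1) : ℝ) - 1

theorem epsn_pos (n : ℕ) : 0 < epsn n := by
  have h : (1:ℝ) < (2:ℝ) ^ ((2:ℝ)⁻¹ ^ (n+1) : ℝ) := by
    apply Real.one_lt_rpow_iff_of_pos (by norm_num) |>.2
    exact Or.inl ⟨by norm_num, by positivity⟩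
  simp only [epsn]; linarith

theorem rpow_prod_sum (s : Finset ℕ) (t : ℕ → ℝ) :
    ∏ i ∈ s, (2:ℝ) ^ (t i) = (2:ℝ) ^ (∑ i ∈ s, t i) := by
  classical
  induction s using Finset.induction with
  | empty => simp
  | insert _ _ h ih =>
    rw [Finset.prod_insert h, Finset.sum_insert h, ih, ← Real.rpow_add (by norm_num)]

theorem epsn_prod_le (m n : ℕ) : ∏ i ∈ Finset.Ico m n, (1 + epsn i) ≤ 2 := by
  have he : ∀ i, 1 + epsn i = (2:ℝ) ^ ((2:ℝ)⁻¹ ^ (i+1) : ℝ) := by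
    intro i; simp [epsn]
  calc ∏ i ∈ Finset.Ico m n, (1 + epsn i)
      = (2:ℝ) ^ (∑ i ∈ Finset.Ico m n, ((2:ℝ)⁻¹ ^ (i+1) : ℝ)) := by
        rw [← rpow_prod_sum]; exact Finset.prod_congr rfl fun i _ => he i
    _ ≤ (2:ℝ) ^ (1:ℝ) := by
        apply Real.rpow_le_rpow_of_exponent_le (by norm_num)
        calc ∑ i ∈ Finset.Ico m n, ((2:ℝ)⁻¹ ^ (i+1) : ℝ)
            ≤ ∑ i ∈ Finset.range n, ((2:ℝ)⁻¹ ^ (i+1) : ℝ) := by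
              apply Finset.sum_le_sum_of_subset_of_nonneg
              · intro i hi
                simp only [Finset.mem_Ico] at hi
                exact Finset.mem_range.2 hi.2
              · intro i _ _; positivity
          _ = (2:ℝ)⁻¹ * ∑ i ∈ Finset.range n, ((2:ℝ)⁻¹ ^ i : ℝ) := by
              rw [Finset.mul_sum]
              exact Finset.sum_congr rfl fun i _ => by ring
          _ ≤ (2:ℝ)⁻¹ * 2 := by
              apply mul_le_mul_of_nonneg_left _ (by norm_num)
              have := sum_geometric_two_le n
              simpa [one_div] using this
          _ = 1 := by norm_num
    _ = 2 := Real.rpow_one 2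

theorem one_le_epsn_prod (m n : ℕ) : 1 ≤ ∏ i ∈ Finset.Ico m n, (1 + epsn i) := by
  have := Finset.prod_le_prod (s := Finset.Ico m n) (f := fun _ => (1:ℝ))
    (g := fun i => 1 + epsn i) (fun i _ => by norm_num) (fun j _ => le_add_of_nonneg_right (epsn_pos j).le)
  simpa using this

noncomputable def mseq (hX : ¬ FiniteDimensional 𝕜 X) : ℕ → X
  | n =>
    (mazur 𝕜 hX (Submodule.span 𝕜 (Set.range (fun i : Fin n => mseq hX i)))
      (FiniteDimensional.span_of_finite 𝕜 (Set.finite_range _)) (epsn_pos n)).choose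
termination_by n => n
decreasing_by all_goals exact i.isLt

theorem mseq_spec (hX : ¬ FiniteDimensional 𝕜 X) (n : ℕ) :
    ‖mseq 𝕜 hX n‖ = 1 ∧
      ∀ y ∈ Submodule.span 𝕜 (Set.range (fun i : Fin n => mseq 𝕜 hX i)), ∀ c : 𝕜,
        ‖y‖ ≤ (1 + epsn n) * ‖y + c • mseq 𝕜 hX n‖ := by
  rw [mseq]
  exact (mazur 𝕜 hX (Submodule.span 𝕜 (Set.range (fun i : Fin n => mseq 𝕜 hX i)))
    (FiniteDimensional.span_of_finite 𝕜 (Set.finite_range _)) (epsn_pos n)).choose_spec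

section Grun
variable {𝕜} (hX : ¬ FiniteDimensional 𝕜 X)

theorem partialSum_mem (a : ℕ → 𝕜) (n : ℕ) :
    partialSum 𝕜 (mseq 𝕜 hX) a n ∈
      Submodule.span 𝕜 (Set.range (fun i : Fin n => mseq 𝕜 hX i)) := by
  apply Submodule.sum_mem
  intro i hi
  exact Submodule.smul_mem _ _ (Submodule.subset_span ⟨⟨i, Finset.mem_range.1 hi⟩, rfl⟩)

theorem partialSum_succ (x : ℕ → X) (a : ℕ → 𝕜) (n : ℕ) :
    partialSum 𝕜 x a (n+1) = partialSum 𝕜 x a n + a n • x n :=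
  Finset.sum_range_succ _ _

theorem grun_step (a : ℕ → 𝕜) (n : ℕ) :
    ‖partialSum 𝕜 (mseq 𝕜 hX) a n‖ ≤ (1 + epsn n) * ‖partialSum 𝕜 (mseq 𝕜 hX) a (n+1)‖ := by
  have h := (mseq_spec 𝕜 hX n).2 _ (partialSum_mem hX a n) (a n)
  rw [partialSum_succ]
  exact h

theorem grun_prod (a : ℕ → 𝕜) (m : ℕ) : ∀ n, m ≤ n →
    ‖partialSum 𝕜 (mseq 𝕜 hX) a m‖ ≤
      (∏ i ∈ Finset.Ico m n, (1 + epsn i)) * ‖partialSum 𝕜 (mseq 𝕜 hX) a n‖ := by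
  intro n
  induction n with
  | zero => intro h; interval_cases m; simp
  | succ n ih =>
    intro h
    rcases Nat.lt_or_ge m (n+1) with h' | h'
    · have hmn : m ≤ n := Nat.lt_succ_iff.1 h'
      calc ‖partialSum 𝕜 (mseq 𝕜 hX) a m‖
          ≤ (∏ i ∈ Finset.Ico m n, (1 + epsn i)) * ‖partialSum 𝕜 (mseq 𝕜 hX) a n‖ := ih hmn
        _ ≤ (∏ i ∈ Finset.Ico m n, (1 + epsn i)) *
              ((1 + epsn n) * ‖partialSum 𝕜 (mseq 𝕜 hX) a (n+1)‖) := by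
            apply mul_le_mul_of_nonneg_left (grun_step hX a n)
            linarith [one_le_epsn_prod m n]
        _ = (∏ i ∈ Finset.Ico m (n+1), (1 + epsn i)) * ‖partialSum 𝕜 (mseq 𝕜 hX) a (n+1)‖ := by
            rw [Finset.prod_Ico_succ_top hmn]; ring
    · have : m = n+1 := le_antisymm h h'
      subst this; simp

theorem grun2 (a : ℕ → 𝕜) {m n : ℕ} (h : m ≤ n) :
    ‖partialSum 𝕜 (mseq 𝕜 hX) a m‖ ≤ 2 * ‖partialSum 𝕜 (mseq 𝕜 hX) a n‖ := by
  calc ‖partialSum 𝕜 (mseq 𝕜 hX) a m‖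
      ≤ (∏ i ∈ Finset.Ico m n, (1 + epsn i)) * ‖partialSum 𝕜 (mseq 𝕜 hX) a n‖ :=
        grun_prod hX a m n h
    _ ≤ 2 * ‖partialSum 𝕜 (mseq 𝕜 hX) a n‖ :=
        mul_le_mul_of_nonneg_right (epsn_prod_le m n) (norm_nonneg _)

theorem partialSum_sub (x : ℕ → X) (a b : ℕ → 𝕜) (n : ℕ) :
    partialSum 𝕜 x (a - b) n = partialSum 𝕜 x a n - partialSum 𝕜 x b n := by
  simp only [partialSum, ← Finset.sum_sub_distrib]
  exact Finset.sum_congr rfl fun i _ => by simp [sub_smul]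

theorem coeff_norm (a : ℕ → 𝕜) (m : ℕ) :
    ‖a m‖ = ‖partialSum 𝕜 (mseq 𝕜 hX) a (m+1) - partialSum 𝕜 (mseq 𝕜 hX) a m‖ := by
  rw [partialSum_succ, add_sub_cancel_left, norm_smul, (mseq_spec 𝕜 hX m).1, mul_one]

theorem coeff_bound (a : ℕ → 𝕜) {m N : ℕ} (h : m < N) :
    ‖a m‖ ≤ 4 * ‖partialSum 𝕜 (mseq 𝕜 hX) a N‖ := by
  rw [coeff_norm hX]
  calc ‖partialSum 𝕜 (mseq 𝕜 hX) a (m+1) - partialSum 𝕜 (mseq 𝕜 hX) a m‖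
      ≤ ‖partialSum 𝕜 (mseq 𝕜 hX) a (m+1)‖ + ‖partialSum 𝕜 (mseq 𝕜 hX) a m‖ := norm_sub_le _ _
    _ ≤ 2 * ‖partialSum 𝕜 (mseq 𝕜 hX) a N‖ + 2 * ‖partialSum 𝕜 (mseq 𝕜 hX) a N‖ :=
        add_le_add (grun2 hX a h) (grun2 hX a (le_of_lt (Nat.lt_of_lt_of_le h (le_refl N))))
    _ = 4 * ‖partialSum 𝕜 (mseq 𝕜 hX) a N‖ := by ring

theorem tendsto_zero_coeff (c : ℕ → 𝕜)
    (hc : Filter.Tendsto (partialSum 𝕜 (mseq 𝕜 hX) c) Filter.atTop (nhds 0)) :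
    c = 0 := by
  have hS : ∀ m, partialSum 𝕜 (mseq 𝕜 hX) c m = 0 := by
    intro m
    have h1 : ‖partialSum 𝕜 (mseq 𝕜 hX) c m‖ ≤ 0 := by
      have h2 : Filter.Tendsto (fun n => 2 * ‖partialSum 𝕜 (mseq 𝕜 hX) c n‖)
          Filter.atTop (nhds (2 * ‖(0:X)‖)) :=
        (hc.norm).const_mul 2
      rw [norm_zero, mul_zero] at h2
      exact ge_of_tendsto h2 (Filter.eventually_atTop.2 ⟨m, fun n hn => grun2 hX c hn⟩)
    simpa using norm_le_zero_iff.1 h1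
  funext m
  have := coeff_norm hX c m
  rw [hS, hS, sub_zero, norm_zero] at this
  simpa using norm_eq_zero.1 this

end Grun

section Exist
variable {𝕜} (hX : ¬ FiniteDimensional 𝕜 X)

theorem exists_rep {w : X} (hw : w ∈ Submodule.span 𝕜 (Set.range (mseq 𝕜 hX))) :
    ∃ (b : ℕ → 𝕜) (N : ℕ), ∀ n, N ≤ n → partialSum 𝕜 (mseq 𝕜 hX) b n = w := by
  rw [Finsupp.mem_span_range_iff_exists_finsupp] at hw
  obtain ⟨c, hc⟩ := hw
  refine ⟨c, (c.support.sup id) + 1, fun n hn => ?_⟩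
  have hsub : c.support ⊆ Finset.range n := by
    intro i hi
    have : id i ≤ c.support.sup id := Finset.le_sup hi
    simp only [id] at this
    exact Finset.mem_range.2 (by omega)
  rw [← hc]
  rw [Finsupp.sum_of_support_subset c hsub (fun i a => a • mseq 𝕜 hX i) (by simp)]
  rfl

theorem pair_bound (b b' : ℕ → 𝕜) {N N' : ℕ} {w w' : X}
    (h : ∀ n, N ≤ n → partialSum 𝕜 (mseq 𝕜 hX) b n = w)
    (h' : ∀ n, N' ≤ n → partialSum 𝕜 (mseq 𝕜 hX) b' n = w') (m : ℕ) :
    ‖partialSum 𝕜 (mseq 𝕜 hX) b m - partialSum 𝕜 (mseq 𝕜 hX) b' m‖ ≤ 2 * ‖w - w'‖ := by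
  set n := max m (max N N') with hn
  have h1 : partialSum 𝕜 (mseq 𝕜 hX) (b - b') n = w - w' := by
    rw [partialSum_sub, h n (le_trans (le_max_left _ _) (le_max_right _ _)),
      h' n (le_trans (le_max_right _ _) (le_max_right _ _))]
  calc ‖partialSum 𝕜 (mseq 𝕜 hX) b m - partialSum 𝕜 (mseq 𝕜 hX) b' m‖
      = ‖partialSum 𝕜 (mseq 𝕜 hX) (b - b') m‖ := by rw [partialSum_sub]
    _ ≤ 2 * ‖partialSum 𝕜 (mseq 𝕜 hX) (b - b') n‖ := grun2 hX _ (le_max_left _ _)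
    _ = 2 * ‖w - w'‖ := by rw [h1]

theorem pair_coeff_bound (b b' : ℕ → 𝕜) {N N' : ℕ} {w w' : X}
    (h : ∀ n, N ≤ n → partialSum 𝕜 (mseq 𝕜 hX) b n = w)
    (h' : ∀ n, N' ≤ n → partialSum 𝕜 (mseq 𝕜 hX) b' n = w') (i : ℕ) :
    ‖b i - b' i‖ ≤ 4 * ‖w - w'‖ := by
  set n := max (i+1) (max N N') with hn
  have h1 : partialSum 𝕜 (mseq 𝕜 hX) (b - b') n = w - w' := by
    rw [partialSum_sub, h n (le_trans (le_max_left _ _) (le_max_right _ _)),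
      h' n (le_trans (le_max_right _ _) (le_max_right _ _))]
  have h2 := coeff_bound hX (b - b') (show i < n from lt_of_lt_of_le (Nat.lt_succ_self i) (le_max_left _ _))
  rw [h1] at h2
  simpa using h2

theorem exists_expansion {v : X}
    (hv : v ∈ closure (Submodule.span 𝕜 (Set.range (mseq 𝕜 hX)) : Set X)) :
    ∃ a : ℕ → 𝕜, Filter.Tendsto (partialSum 𝕜 (mseq 𝕜 hX) a) Filter.atTop (nhds v) := by
  obtain ⟨u, hu, hulim⟩ := mem_closure_iff_seq_limit.1 hv
  choose b N hb using fun k => exists_rep hX (hu k)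
  have hucs : CauchySeq u := hulim.cauchySeq
  -- coefficients converge
  have hcs : ∀ i, CauchySeq (fun k => b k i) := by
    intro i
    rw [Metric.cauchySeq_iff]
    intro ε hε
    obtain ⟨K, hK⟩ := Metric.cauchySeq_iff.1 hucs (ε/4) (by linarith)
    refine ⟨K, fun k hk j hj => ?_⟩
    have := pair_coeff_bound hX (b k) (b j) (hb k) (hb j) i
    have hd := hK k hk j hj
    rw [dist_eq_norm] at hd ⊢
    calc ‖b k i - b j i‖ ≤ 4 * ‖u k - u j‖ := this
      _ < 4 * (ε/4) := by
          apply mul_lt_mul_of_pos_left _ (by norm_num)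
          exact hd
      _ = ε := by ring
  choose a ha using fun i => cauchySeq_tendsto_of_complete (hcs i)
  refine ⟨a, ?_⟩
  -- partial sums of b k converge to partial sums of a
  have hSm : ∀ m, Filter.Tendsto (fun k => partialSum 𝕜 (mseq 𝕜 hX) (b k) m)
      Filter.atTop (nhds (partialSum 𝕜 (mseq 𝕜 hX) a m)) := by
    intro m
    apply tendsto_finset_sum
    intro i _
    exact (ha i).smul_const (mseq 𝕜 hX i)
  rw [Metric.tendsto_atTop]
  intro ε hε
  obtain ⟨K1, hK1⟩ := Metric.cauchySeq_iff.1 hucs (ε/8) (by linarith)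
  obtain ⟨K2, hK2⟩ := (Metric.tendsto_atTop.1 hulim) (ε/4) (by linarith)
  set K := max K1 K2 with hK
  refine ⟨N K, fun m hm => ?_⟩
  -- ‖S m a - S m (b K)‖ ≤ ε/4
  have hstep : ‖partialSum 𝕜 (mseq 𝕜 hX) a m - partialSum 𝕜 (mseq 𝕜 hX) (b K) m‖ ≤ ε/4 := by
    have htend : Filter.Tendsto
        (fun k => ‖partialSum 𝕜 (mseq 𝕜 hX) (b k) m - partialSum 𝕜 (mseq 𝕜 hX) (b K) m‖)
        Filter.atTop (nhds ‖partialSum 𝕜 (mseq 𝕜 hX) a m - partialSum 𝕜 (mseq 𝕜 hX) (b K) m‖) :=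
      ((hSm m).sub tendsto_const_nhds).norm
    apply le_of_tendsto htend
    refine Filter.eventually_atTop.2 ⟨K, fun k hk => ?_⟩
    have := pair_bound hX (b k) (b K) (hb k) (hb K) m
    have hd := hK1 k (le_trans (le_max_left _ _) hk) K (le_max_left _ _)
    rw [dist_eq_norm] at hd
    calc ‖partialSum 𝕜 (mseq 𝕜 hX) (b k) m - partialSum 𝕜 (mseq 𝕜 hX) (b K) m‖
        ≤ 2 * ‖u k - u K‖ := this
      _ ≤ 2 * (ε/8) := by
          apply mul_le_mul_of_nonneg_left (le_of_lt hd) (by norm_num)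
      _ ≤ ε/4 := by linarith
  have hbKm : partialSum 𝕜 (mseq 𝕜 hX) (b K) m = u K := hb K m hm
  have huKv : dist (u K) v < ε/4 := hK2 K (le_max_right _ _)
  rw [dist_eq_norm] at huKv ⊢
  calc ‖partialSum 𝕜 (mseq 𝕜 hX) a m - v‖
      ≤ ‖partialSum 𝕜 (mseq 𝕜 hX) a m - partialSum 𝕜 (mseq 𝕜 hX) (b K) m‖
        + ‖partialSum 𝕜 (mseq 𝕜 hX) (b K) m - v‖ := norm_sub_le_norm_sub_add_norm_sub _ _ _
    _ ≤ ε/4 + ε/4 := by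
        apply add_le_add hstep
        rw [hbKm]; exact le_of_lt huKv
    _ < ε := by linarith

end Exist

section Final
variable {𝕜} (hX : ¬ FiniteDimensional 𝕜 X)

theorem mseq_linearIndependent : LinearIndependent 𝕜 (mseq 𝕜 hX) := by
  rw [linearIndependent_iff']
  intro s g hsum i his
  classical
  set c : ℕ → 𝕜 := fun j => if j ∈ s then g j else 0 with hc
  set n : ℕ := (s.sup id) + 1 with hn
  have hsub : s ⊆ Finset.range n := by
    intro j hj
    have : id j ≤ s.sup id := Finset.le_sup hj
    simp only [id] at this
    exact Finset.mem_range.2 (by omega)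
  have hSn : ∀ m, n ≤ m → partialSum 𝕜 (mseq 𝕜 hX) c m = 0 := by
    intro m hnm
    have : partialSum 𝕜 (mseq 𝕜 hX) c m = ∑ j ∈ s, g j • mseq 𝕜 hX j := by
      rw [partialSum]
      rw [← Finset.sum_subset (hsub.trans (Finset.range_subset_range.2 hnm))]
      · exact Finset.sum_congr rfl fun j hj => by simp [hc, hj]
      · intro j _ hjs; simp [hc, hjs]
    rw [this, hsum]
  have hczero : c = 0 := by
    apply tendsto_zero_coeff hX
    exact tendsto_atTop_of_eventually_const hSn
  have := congrFun hczero i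
  simpa [hc, his] using this

theorem mseq_not_finiteDimensional :
    ¬ FiniteDimensional 𝕜 (Submodule.span 𝕜 (Set.range (mseq 𝕜 hX))).topologicalClosure := by
  intro hfd
  set Y := (Submodule.span 𝕜 (Set.range (mseq 𝕜 hX))).topologicalClosure with hY
  have hmem : ∀ n, mseq 𝕜 hX n ∈ Y :=
    fun n => (Submodule.le_topologicalClosure _) (Submodule.subset_span ⟨n, rfl⟩)
  set f : ℕ → Y := fun n => ⟨mseq 𝕜 hX n, hmem n⟩ with hf
  have hcomp : (Y.subtype : Y →ₗ[𝕜] X) ∘ f = mseq 𝕜 hX := rfl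
  have hli : LinearIndependent 𝕜 f := by
    apply LinearIndependent.of_comp (Y.subtype)
    rw [hcomp]
    exact mseq_linearIndependent hX
  have : Finite ℕ := hli.finite
  exact not_finite ℕ

end Final

theorem stmt15' (hX : ¬ FiniteDimensional 𝕜 X) :
    ∃ x : ℕ → X,
      (∀ v ∈ closure (Submodule.span 𝕜 (Set.range x) : Set X),
          ∃! a : ℕ → 𝕜, Filter.Tendsto (partialSum 𝕜 x a) Filter.atTop (nhds v)) ∧
      ¬ FiniteDimensional 𝕜 (Submodule.span 𝕜 (Set.range x)).topologicalClosure ∧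
      ∃ C > 0, ∀ (a : ℕ → 𝕜) (v : X),
        Filter.Tendsto (partialSum 𝕜 x a) Filter.atTop (nhds v) →
        ∀ n, ‖partialSum 𝕜 x a n‖ ≤ C * ‖v‖ := by
  refine ⟨mseq 𝕜 hX, ?_, mseq_not_finiteDimensional hX, 2, by norm_num, ?_⟩
  · intro v hv
    obtain ⟨a, ha⟩ := exists_expansion hX hv
    refine ⟨a, ha, ?_⟩
    intro a' ha'
    have hsub : Filter.Tendsto (partialSum 𝕜 (mseq 𝕜 hX) (a' - a)) Filter.atTop (nhds 0) := by
      have := ha'.sub ha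
      rw [sub_self] at this
      convert this using 1
      funext m
      exact partialSum_sub (mseq 𝕜 hX) a' a m
    have := tendsto_zero_coeff hX _ hsub
    exact sub_eq_zero.1 this
  · intro a v ha n
    have htend : Filter.Tendsto (fun m => 2 * ‖partialSum 𝕜 (mseq 𝕜 hX) a m‖)
        Filter.atTop (nhds (2 * ‖v‖)) := (ha.norm).const_mul 2
    exact ge_of_tendsto htend (Filter.eventually_atTop.2 ⟨n, fun m hm => grun2 hX a hm⟩)

/-- every infinite-dimensional normed space contains an infinite-dimensional
closed subspace with a Schauder basis whose canonical projections are uniformly bounded. -/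
theorem stmt15 (hX : ¬ FiniteDimensional 𝕜 X) :
    ∃ x : ℕ → X,
      (∀ v ∈ closure (Submodule.span 𝕜 (Set.range x) : Set X),
          ∃! a : ℕ → 𝕜, Expands 𝕜 x a v) ∧
      ¬ FiniteDimensional 𝕜 (Submodule.span 𝕜 (Set.range x)).topologicalClosure ∧
      ∃ C > 0, ∀ (a : ℕ → 𝕜) (v : X), Expands 𝕜 x a v →
        ∀ n, ‖partialSum 𝕜 x a n‖ ≤ C * ‖v‖ :=
  stmt15' 𝕜 hX
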